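/- With the fragmentation C_n constructed from a uniformly Fréchet convergence ideal I, no sequence belonging to I is entirely contained in any single C_n; consequently the fragmentation is σ-finite cc (every antichain in each C_n is finite). -/
import Mathlib


open Filter Topology

variable {α : Type*}

/-- A convergence ideal on a Boolean algebra: a set of infinite sequences
(i) with no nonzero common lower bound, (ii) closed under subsequences,
(iii) closed under minorization, (iv) closed under pairwise joins, and
(v) containing every infinite antichain (sequence of pairwise disjoint nonzero elements). -/
def IsConvIdeal [BooleanAlgebra α] (I : Set (ℕ → α)) : Prop :=
  (∀ a ∈ I, ∀ b : α, (∀ n, b ≤ a n) → b = ⊥) ∧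
  (∀ a ∈ I, ∀ φ : ℕ → ℕ, StrictMono φ → (fun n => a (φ n)) ∈ I) ∧
  (∀ a ∈ I, ∀ b : ℕ → α, (∀ n, b n ≤ a n) → b ∈ I) ∧
  (∀ a ∈ I, ∀ b ∈ I, (fun n => a n ⊔ b n) ∈ I) ∧
  (∀ a : ℕ → α, (∀ n, a n ≠ ⊥) → (∀ i j, i ≠ j → a i ⊓ a j = ⊥) → a ∈ I)

/-- `ConvTo I a c` : the sequence `a` converges to `c`, i.e. `{a n ∆ c} ∈ I`. -/
def ConvTo [BooleanAlgebra α] (I : Set (ℕ → α)) (a : ℕ → α) (c : α) : Prop :=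
  (fun n => symmDiff (a n) c) ∈ I

/-- `F k` picks a term of its argument sequence. -/
def IsSelective [BooleanAlgebra α] (F : ℕ → (ℕ → α) → α) : Prop :=
  ∀ k, ∀ x : ℕ → α, ∃ n, F k x = x n

/-- Uniform Fréchet property of a convergence ideal witnessed by choice functions `F`. -/
def UnifFrechet [BooleanAlgebra α] (I : Set (ℕ → α)) (F : ℕ → (ℕ → α) → α) : Prop :=
  ∀ x : ℕ → ℕ → α, (∀ k, x k ∈ I) → (fun k => F k (x k)) ∈ I

/-- `Vset I F k = {a : a ≤ F k x for some x ∈ I}`. -/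
def Vset [BooleanAlgebra α] (I : Set (ℕ → α)) (F : ℕ → (ℕ → α) → α) (k : ℕ) : Set α :=
  {a | ∃ x ∈ I, a ≤ F k x}

/-- `Uset I F n = Vset 0 ∩ ... ∩ Vset n`. -/
def Uset [BooleanAlgebra α] (I : Set (ℕ → α)) (F : ℕ → (ℕ → α) → α) (n : ℕ) : Set α :=
  {a | ∀ k ≤ n, a ∈ Vset I F k}

/-- `Cset I F n = B \\ Uset I F n`. -/
def Cset [BooleanAlgebra α] (I : Set (ℕ → α)) (F : ℕ → (ℕ → α) → α) (n : ℕ) : Set α :=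
  (Uset I F n)ᶜ

theorem stmt12 [BooleanAlgebra α]
    (I : Set (ℕ → α)) (hI : IsConvIdeal I)
    (F : ℕ → (ℕ → α) → α) (hsel : IsSelective F) (hunif : UnifFrechet I F) :
    (∀ a ∈ I, ∀ n : ℕ, ∃ k, a k ∉ Cset I F n) ∧
    (∀ n : ℕ, ∀ A : Set α, A ⊆ Cset I F n → (⊥ : α) ∉ A →
      A.Pairwise (fun a b => a ⊓ b = ⊥) → A.Finite) := by
  obtain ⟨h1, hsub, hmin, hjoin, hanti⟩ := hI
  have main : ∀ a ∈ I, ∀ n : ℕ, ∃ k, a k ∉ Cset I F n := by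
    intro a ha n
    by_contra h
    push_neg at h
    have hj : ∀ k, ∃ j : Fin (n + 1), a k ∉ Vset I F j := by
      intro k
      have hk := h k
      simp only [Cset, Uset, Set.mem_compl_iff, Set.mem_setOf_eq, not_forall] at hk
      obtain ⟨j, hjn, hv⟩ := hk
      exact ⟨⟨j, Nat.lt_succ_of_le hjn⟩, hv⟩
    choose g hg using hj
    obtain ⟨j, hjinf⟩ := Finite.exists_infinite_fiber g
    have hS : {k | g k = j}.Infinite := by
      rw [← Set.infinite_coe_iff]
      exact hjinf
    have hmono : StrictMono (Nat.nth (fun k => g k = j)) := Nat.nth_strictMono hS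
    have hb : (fun m => a (Nat.nth (fun k => g k = j) m)) ∈ I := hsub a ha _ hmono
    obtain ⟨m, hm⟩ := hsel j (fun m => a (Nat.nth (fun k => g k = j) m))
    have hmem : a (Nat.nth (fun k => g k = j) m) ∈ Vset I F j :=
      ⟨_, hb, hm.ge⟩
    have hj' : g (Nat.nth (fun k => g k = j) m) = j := Nat.nth_mem_of_infinite hS m
    exact hg _ (by rw [hj']; exact hmem)
  refine ⟨main, ?_⟩
  intro n A hsubA hbot hpair
  by_contra hinf
  have hinf' : A.Infinite := hinf
  set f := hinf'.natEmbedding with hf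
  have ha : (fun k => (f k : α)) ∈ I := by
    apply hanti
    · intro k hk
      exact hbot (hk ▸ (f k).2)
    · intro i k hik
      exact hpair (f i).2 (f k).2 (fun hEq => hik (f.injective (Subtype.ext hEq)))
  obtain ⟨k, hk⟩ := main _ ha n
  exact hk (hsubA (f k).2)
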